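/- Divisibility of the trace: let n ≥ 2 and L ≥ 1, let μ_1,…,μ_L ∈ (ℤ_{≥0})^{n−1} and σ_1,…,σ_L ∈ (ℤ_{≥0})^n, and suppose Σ_{i=1}^L σ_i^n ≥ 1 (at least one species-n particle is present). Then Tr_{F^{⊗(n−1)}}(A^{(n)}_{μ_1,σ_1}⋯A^{(n)}_{μ_L,σ_L}) is finite and, as a polynomial in w_1,…,w_n with nonnegative integer coefficients, is divisible by w_n. -/

import Mathlib

open scoped BigOperators

namespace ITAZRP

/-- Cyclic successor on `Fin L` (site `i+1` on the periodic chain `ℤ_L`). -/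
def cyc {L : ℕ} (i : Fin L) : Fin L := ⟨(i.val + 1) % L, Nat.mod_lt _ i.pos⟩

/-- Cyclic subtraction of a natural number on `Fin L`. -/
def csub {L : ℕ} (s : Fin L) (d : ℕ) : Fin L :=
  ⟨(s.val + (L - d % L)) % L, Nat.mod_lt _ s.pos⟩

/-- Multiplicity representation → multiset representation. -/
def toMul {m : ℕ} (α : Fin m → ℕ) : Multiset (Fin m) :=
  ∑ a : Fin m, Multiset.replicate (α a) a

/-- Multiset representation → multiplicity representation. -/
def ofMul {m : ℕ} (s : Multiset (Fin m)) : Fin m → ℕ := fun a => s.count a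

/-- The relation `(α,β) > (γ,δ)`: there is `k ∈ [1,r]` with
`γ = α ∪ {β_k,…,β_r}` and `δ = (β_1,…,β_{k-1})`; equivalently `β` splits as
`δ + t` with `t ≠ 0`, every element of `δ` below every element of `t`,
and `γ = α + t`. -/
def GtRel {m : ℕ} (α β γ δ : Multiset (Fin m)) : Prop :=
  ∃ t : Multiset (Fin m), t ≠ 0 ∧ β = δ + t ∧ γ = α + t ∧ ∀ x ∈ δ, ∀ y ∈ t, x ≤ y

theorem GtRel.sub_nonempty {m : ℕ} {α β γ δ : Multiset (Fin m)} (h : GtRel α β γ δ) :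
    (γ - α).toFinset.Nonempty := by
  obtain ⟨t, ht, -, hγ, -⟩ := h
  rw [hγ, add_tsub_cancel_left]
  exact Multiset.toFinset_nonempty.mpr ht

/-- Minimum of a nonempty multiset over `Fin m`. -/
def msetMin {m : ℕ} (t : Multiset (Fin m)) (h : t.toFinset.Nonempty) : Fin m :=
  t.toFinset.min' h

/-- `g(β) = w_1 β^1 + ⋯ + w_n β^n`. -/
noncomputable def gVal {m : ℕ} (w : Fin m → ℝ) (β : Multiset (Fin m)) : ℝ := (β.map w).sum

open Classical in
/-- The transition rate `w_{min(γ∖α)}` when `(α,β) > (γ,δ)`, and `0` otherwise. -/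
noncomputable def wRateM {m : ℕ} (w : Fin m → ℝ) (α β γ δ : Multiset (Fin m)) : ℝ :=
  if h : GtRel α β γ δ then w (msetMin (γ - α) h.sub_nonempty) else 0

open Classical in
/-- The local Markov matrix entry `h^{γ,δ}_{α,β}` in multiset representation. -/
noncomputable def hEntM {m : ℕ} (w : Fin m → ℝ) (α β γ δ : Multiset (Fin m)) : ℝ :=
  if h : GtRel α β γ δ then w (msetMin (γ - α) h.sub_nonempty)
  else if α = γ ∧ β = δ then -(gVal w β) else 0

/-- The local Markov matrix entry `h^{γ,δ}_{α,β}` in multiplicity representation. -/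
noncomputable def hEnt {m : ℕ} (w : Fin m → ℝ) (α β γ δ : Fin m → ℕ) : ℝ :=
  hEntM w (toMul α) (toMul β) (toMul γ) (toMul δ)


/-- Product of two (possibly infinite) matrices, entries summed by `tsum`. -/
noncomputable def matMul {ι : Type*} (X Y : ι → ι → ℝ) : ι → ι → ℝ :=
  fun s t => ∑' u, X s u * Y u t

/-- Trace of a (possibly infinite) matrix, summed by `tsum`. -/
noncomputable def matTrace {ι : Type*} (X : ι → ι → ℝ) : ℝ := ∑' s, X s s

open Classical in
/-- Ordered product `f 0 * f 1 * ⋯ * f (L-1)` of matrices. -/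
noncomputable def matProd {ι : Type*} : (L : ℕ) → (Fin L → (ι → ι → ℝ)) → (ι → ι → ℝ)
  | 0, _ => fun s t => if s = t then 1 else 0
  | (L + 1), f => matMul (f 0) (matProd L fun i => f i.succ)

/-- The diagonal part `Σ_{r=1}^{n-1} θ(α^{r+1} = ⋯ = α^n = 0) ρ_r K_r + ρ_n K_n`
of the operator `A`, evaluated at the Fock basis vector labelled `u`;
here `ρ` is the rate attached to each `K_r`. -/
noncomputable def Dval (Nm : ℕ) (ρ : Fin (Nm + 1) → ℝ) (α : Fin (Nm + 1) → ℕ)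
    (u : Fin Nm → ℕ) : ℝ :=
  (∑ r : Fin Nm,
      if (∀ b : Fin (Nm + 1), (r : ℕ) < (b : ℕ) → α b = 0) ∧
          (∀ j : Fin Nm, j < r → u j = 0) ∧ u r ≠ 0
      then ρ r.castSucc else 0)
    + (if ∀ j, u j = 0 then ρ (Fin.last Nm) else 0)

open Classical in
/-- Matrix entries of `P_+(μ) (Σ_r θ(⋯) ρ_r K_r + ρ_n K_n) P_-(ᾱ)`
on `F^{⊗ Nm}` (where `n = Nm + 1`). -/
noncomputable def AentGen (Nm : ℕ) (ρ : Fin (Nm + 1) → ℝ) (μ : Fin Nm → ℕ)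
    (α : Fin (Nm + 1) → ℕ) : (Fin Nm → ℕ) → (Fin Nm → ℕ) → ℝ :=
  fun s t =>
    if (∀ j, μ j ≤ s j) ∧ (∀ j, t j = s j - μ j + α j.castSucc)
    then Dval Nm ρ α (fun j => s j - μ j) else 0

/-- Matrix entries of the operator `A^{(n)}_{μ,α}` with `n = Nm + 1`. -/
noncomputable def Aent (Nm : ℕ) (w : Fin (Nm + 1) → ℝ) (μ : Fin Nm → ℕ)
    (α : Fin (Nm + 1) → ℕ) : (Fin Nm → ℕ) → (Fin Nm → ℕ) → ℝ :=
  AentGen Nm w μ α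

/-- Matrix entries of the operator `Â^{(n)}_{μ,α}` with `n = Nm + 1`:
the rate `w_r` is replaced by `w_r (w_r + g(α))`. -/
noncomputable def AhatEnt (Nm : ℕ) (w : Fin (Nm + 1) → ℝ) (μ : Fin Nm → ℕ)
    (α : Fin (Nm + 1) → ℕ) : (Fin Nm → ℕ) → (Fin Nm → ℕ) → ℝ :=
  AentGen Nm (fun r => w r * (w r + gVal w (toMul α))) μ α

/-- Index set of the Fock space `F^{⊗ n(n-1)/2}` (`n = N+1`), split into blocks of
sizes `1, 2, …, N`: block `a` carries the factor `F^{⊗ (a+1)}` on which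
`A^{(a+2)}` acts. -/
abbrev BigIdx (N : ℕ) := (a : Fin N) → (Fin (a.val + 1) → ℕ)

/-- Extend a tuple `(μ^{(1)}, …, μ^{(N)})` by `μ^{(N+1)} := σ`. -/
def mextend (N : ℕ) (μ : BigIdx N) (σ : Fin (N + 1) → ℕ) :
    (k : Fin (N + 1)) → Fin (k.val + 1) → ℕ :=
  fun k j => if h : (k : ℕ) < N then μ ⟨k, h⟩ j
    else σ (Fin.castLE (Nat.succ_le_of_lt k.isLt) j)

/-- Matrix entries of
`X_σ = Σ_{μ^{(1)},…,μ^{(N)}} A^{(2)}_{μ^{(1)},μ^{(2)}} ⊗ ⋯ ⊗ A^{(N+1)}_{μ^{(N)},σ}`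
acting on `F^{⊗ N(N+1)/2}` (with `n = N + 1` species). -/
noncomputable def Xent (N : ℕ) (w : Fin (N + 1) → ℝ) (σ : Fin (N + 1) → ℕ) :
    BigIdx N → BigIdx N → ℝ :=
  fun s t => ∑' μ : BigIdx N, ∏ a : Fin N,
    Aent (a.val + 1) (fun b => w (Fin.castLE (Nat.succ_le_succ a.isLt) b))
      (mextend N μ σ ⟨a.val, Nat.lt_succ_of_lt a.isLt⟩)
      (mextend N μ σ ⟨a.val + 1, Nat.succ_lt_succ a.isLt⟩)
      (s a) (t a)

/-- A configuration of the `m`-species process on the periodic chain `ℤ_L`. -/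
abbrev Config (L m : ℕ) := Fin L → (Fin m → ℕ)

/-- Membership in the sector `S(mm)`: the total multiplicity of each species is `mm`. -/
def inSector {L m : ℕ} (σ : Config L m) (mm : Fin m → ℕ) : Prop :=
  ∀ a, (∑ i, σ i a) = mm a

/-- Replace the local states at the cyclically adjacent sites `i, i+1` by `a, b`. -/
def update2 {L m : ℕ} (σ : Config L m) (i : Fin L) (a b : Fin m → ℕ) : Config L m :=
  fun j => if j = i then a else if j = cyc i then b else σ j

/-- The left hand side
`Σ_{i ∈ ℤ_L} Σ_{σ'_i, σ'_{i+1}} h^{σ_i,σ_{i+1}}_{σ'_i,σ'_{i+1}} P(σ_1,…,σ'_i,σ'_{i+1},…,σ_L)`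
of the stationarity equation. -/
noncomputable def stationaryTerm {L m : ℕ} (w : Fin m → ℝ) (P : Config L m → ℝ)
    (σ : Config L m) : ℝ :=
  ∑ i : Fin L, ∑' p : (Fin m → ℕ) × (Fin m → ℕ),
    hEnt w p.1 p.2 (σ i) (σ (cyc i)) * P (update2 σ i p.1 p.2)

/-- `P` satisfies the stationarity (steady state) equation on the sector `S(mm)`. -/
def IsStationary {L m : ℕ} (w : Fin m → ℝ) (P : Config L m → ℝ) (mm : Fin m → ℕ) : Prop :=
  ∀ σ : Config L m, inSector σ mm → stationaryTerm w P σ = 0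

/-- `ℓ_a = m_1 + ⋯ + m_a`. -/
def ell {m : ℕ} (mm : Fin m → ℕ) (a : Fin m) : ℕ :=
  ∑ b : Fin m, if b ≤ a then mm b else 0

/-- The family `Q` of polynomials in `w_1,…,w_m` is *the* steady state probability of the
`m`-species iTAZRP in the sector `S(mm)`: it satisfies the stationarity equation for all
positive rates, is homogeneous of degree `(m-1)(L-1)` with coefficients in `ℤ_{≥0}`, and its
values at `w_1 = ⋯ = w_m = 1` sum to `Π_a C(L-1+ℓ_a, ℓ_a)` over the sector. -/
noncomputable def IsSteadyState (L m : ℕ) (mm : Fin m → ℕ)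
    (Q : Config L m → MvPolynomial (Fin m) ℝ) : Prop :=
  (∀ w : Fin m → ℝ, (∀ a, 0 < w a) →
      IsStationary w (fun τ => MvPolynomial.eval w (Q τ)) mm)
  ∧ (∀ τ : Config L m, inSector τ mm → (Q τ).IsHomogeneous ((m - 1) * (L - 1)))
  ∧ (∀ τ : Config L m, inSector τ mm → ∀ d : (Fin m) →₀ ℕ, ∃ c : ℕ, (Q τ).coeff d = (c : ℝ))
  ∧ (∑' τ : {τ : Config L m // inSector τ mm},
        MvPolynomial.eval (fun _ => (1 : ℝ)) (Q τ.val))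
      = ∏ a : Fin m, ((L - 1 + ell mm a).choose (ell mm a) : ℝ)

/-- The vector `h_{i,i+1} |σ⟩ = Σ_{γ,δ} h^{γ,δ}_{σ_i,σ_{i+1}} |…,γ,δ,…⟩`, the target pairs
`(γ,δ)` being enumerated by the splitting position `k` of the sorted word of `σ_{i+1}`. -/
noncomputable def hLocAction {L : ℕ} (N : ℕ) (w : Fin (N + 1) → ℝ)
    (σ : Config L (N + 1)) (i : Fin L) : (Config L (N + 1)) →₀ ℝ :=
  (∑ k ∈ Finset.range ((toMul (σ (cyc i))).sort (· ≤ ·)).length,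
      w (((toMul (σ (cyc i))).sort (· ≤ ·)).getD k 0) •
        Finsupp.single
          (update2 σ i
            (ofMul (toMul (σ i) + ↑(((toMul (σ (cyc i))).sort (· ≤ ·)).drop k)))
            (ofMul (↑(((toMul (σ (cyc i))).sort (· ≤ ·)).take k))))
          (1 : ℝ))
    - gVal w (toMul (σ (cyc i))) • Finsupp.single σ (1 : ℝ)

/-- The Markov matrix `H = Σ_{i ∈ ℤ_L} h_{i,i+1}` as a linear endomorphism of the
free vector space on the set of configurations. -/
noncomputable def Hop (N L : ℕ) (w : Fin (N + 1) → ℝ) :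
    ((Config L (N + 1)) →₀ ℝ) →ₗ[ℝ] ((Config L (N + 1)) →₀ ℝ) :=
  Finsupp.linearCombination ℝ (fun σ => ∑ i : Fin L, hLocAction N w σ i)

/-- The cyclic shift `C : |σ_1,…,σ_L⟩ ↦ |σ_L,σ_1,…,σ_{L-1}⟩`. -/
noncomputable def Cop (N L : ℕ) :
    ((Config L (N + 1)) →₀ ℝ) →ₗ[ℝ] ((Config L (N + 1)) →₀ ℝ) :=
  Finsupp.lmapDomain ℝ ℝ (fun σ : Config L (N + 1) => fun j => σ (csub j 1))

/-- The state of the pairing procedure of the TAZRP embedding rule: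
`u j` = number of yet uncolored dots in bottom box `j`;
`done j` = colors of the colored dots in bottom box `j`;
`cross i` = colors of the H-lines crossing the border between bottom boxes `i` and `i+1`. -/
structure PairState (L n : ℕ) where
  u : Fin L → ℕ
  done : Fin L → Multiset (Fin n)
  cross : Fin L → Multiset (Fin n)

open Classical in
/-- Process one species-`c` particle sitting in top box `p`: its H-line starts at the
left adjacent bottom box `p-1` and proceeds left (cyclically) until it first meets a box
with an uncolored dot, which it colors; the borders it crosses are recorded. -/
noncomputable def step {L n : ℕ} (st : PairState L n) (c : Fin n) (p : Fin L) : PairState L n :=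
  match (List.range L).find? (fun d => decide (0 < st.u (csub (csub p 1) d))) with
  | none => st
  | some d =>
      { u := Function.update st.u (csub (csub p 1) d) (st.u (csub (csub p 1) d) - 1)
        done := Function.update st.done (csub (csub p 1) d) (c ::ₘ st.done (csub (csub p 1) d))
        cross := fun j =>
          if ∃ e ∈ Finset.Icc 1 d, j = csub (csub p 1) e then c ::ₘ st.cross j
          else st.cross j }

/-- The particles of the top row, listed species by species in increasing order. -/
def particleList {L : ℕ} (n : ℕ) (σ : Fin L → Multiset (Fin n)) : List (Fin n × Fin L) :=
  (List.finRange n).flatMap fun b =>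
    (List.finRange L).flatMap fun i => List.replicate ((σ i).count b) (b, i)

/-- Run the whole pairing procedure of the embedding rule for the multiline row `x`
(the dots) below the configuration `σ` (the particles). -/
noncomputable def runPairing {L n : ℕ} (x : Fin L → ℕ) (σ : Fin L → Multiset (Fin n)) : PairState L n :=
  (particleList n σ).foldl (fun st bp => step st bp.1 bp.2) ⟨x, fun _ => 0, fun _ => 0⟩

/-- The TAZRP embedding rule `Φ_x(σ)`: colored dots keep their color, remaining
uncolored dots become particles of species `a`. -/
noncomputable def PhiAt {L n : ℕ} (a : Fin n) (x : Fin L → ℕ) (σ : Fin L → Multiset (Fin n)) :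
    Fin L → Multiset (Fin n) :=
  fun j => (runPairing x σ).done j + Multiset.replicate ((runPairing x σ).u j) a

/-- The factor `η_i`: `w_a` if no H-line crosses the border between bottom boxes `i` and
`i+1`, and `w_{min(col_i)}` otherwise. -/
noncomputable def etaAt {L n : ℕ} (a : Fin n) (w : Fin n → ℝ) (x : Fin L → ℕ)
    (σ : Fin L → Multiset (Fin n)) (i : Fin L) : ℝ :=
  if h : (runPairing x σ).cross i = 0 then w a
  else w (msetMin ((runPairing x σ).cross i) (Multiset.toFinset_nonempty.mpr h))

/-- The product `η_1 ⋯ η_L`. -/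
noncomputable def etaProd {L n : ℕ} (a : Fin n) (w : Fin n → ℝ) (x : Fin L → ℕ)
    (σ : Fin L → Multiset (Fin n)) : ℝ :=
  ∏ i : Fin L, etaAt a w x σ i

/-- `ϖ_x(σ) = w_a^{-1} η_1 ⋯ η_L`. -/
noncomputable def varpiAt {L n : ℕ} (a : Fin n) (w : Fin n → ℝ) (x : Fin L → ℕ)
    (σ : Fin L → Multiset (Fin n)) : ℝ :=
  (w a)⁻¹ * etaProd a w x σ

/-- The tower `σ^1, σ^2, …` of configurations: `σ^1` is the 1-species configuration given
by `x^1`, and `σ^{a} = Φ_{x^{a}}(σ^{a-1})` (indices `0,…,N` in Lean). -/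
noncomputable def sigmaSeq {L : ℕ} (N : ℕ) (x : Fin (N + 1) → Fin L → ℕ) :
    ℕ → (Fin L → Multiset (Fin (N + 1)))
  | 0 => fun i => Multiset.replicate (x 0 i) (0 : Fin (N + 1))
  | (k + 1) =>
      if h : k + 1 < N + 1 then
        PhiAt (⟨k + 1, h⟩ : Fin (N + 1)) (x ⟨k + 1, h⟩) (sigmaSeq N x k)
      else sigmaSeq N x k

/-- The projection `π : B(m) → S(m)`, `π(x) = σ^n`. -/
noncomputable def piMap {L : ℕ} (N : ℕ) (x : Fin (N + 1) → Fin L → ℕ) : Config L (N + 1) :=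
  fun i => ofMul (sigmaSeq N x N i)

/-- The weight `W(x) = Π_{a=2}^n ϖ_{x^a}(σ^{a-1})`. -/
noncomputable def Wweight {L : ℕ} (N : ℕ) (w : Fin (N + 1) → ℝ)
    (x : Fin (N + 1) → Fin L → ℕ) : ℝ :=
  ∏ r : Fin N, varpiAt r.succ w (x r.succ) (sigmaSeq N x r.val)

open Classical in
/-- The local Markov matrix entry `h^{γ,δ}_{α,β}` for the single species (`n = 1`) TAZRP,
where a local state is just the number of particles occupying the site. -/
noncomputable def h1 (w1 : ℝ) (α β γ δ : ℕ) : ℝ :=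
  if ∃ k, 1 ≤ k ∧ k ≤ β ∧ γ = α + β - k + 1 ∧ δ = k - 1 then w1
  else if α = γ ∧ β = δ then -(w1 * β) else 0


/-! ### Auxiliary machinery for Statement 12 -/

section TraceAux

variable {ι : Type*}

open Classical in
/-- A "functional" matrix: row `s` is supported at the single column `T s`. -/
noncomputable def funMat (v : ι → ℝ) (T : ι → ι) : ι → ι → ℝ :=
  fun s t => if t = T s then v s else 0

/-- Product of the values along the orbit of `s` under the maps `T i`. -/
noncomputable def pathVal : (L : ℕ) → (Fin L → (ι → ℝ)) → (Fin L → (ι → ι)) → ι → ℝ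
  | 0, _, _, _ => 1
  | (L + 1), v, T, s =>
      v 0 s * pathVal L (fun i => v i.succ) (fun i => T i.succ) (T 0 s)

/-- Endpoint of the orbit of `s` under the maps `T i`. -/
def pathEnd : (L : ℕ) → (Fin L → (ι → ι)) → ι → ι
  | 0, _, s => s
  | (L + 1), T, s => pathEnd L (fun i => T i.succ) (T 0 s)

/-- Backward composition `B 0 (B 1 (… B (k-1) c))`. -/
def backComp : (L : ℕ) → (Fin L → (ι → ι)) → ℕ → ι → ι
  | 0, _, _, c => c
  | (_ + 1), _, 0, c => c
  | (L + 1), B, (k + 1), c => B 0 (backComp L (fun i => B i.succ) k c)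

lemma matMul_funMat (v : ι → ℝ) (T : ι → ι) (Y : ι → ι → ℝ) (s t : ι) :
    matMul (funMat v T) Y s t = v s * Y (T s) t := by
  unfold matMul funMat
  rw [tsum_eq_single (T s)]
  · simp
  · intro u hu; simp [hu]

open Classical in
lemma matProd_funMat (L : ℕ) (v : Fin L → ι → ℝ) (T : Fin L → ι → ι) (s t : ι) :
    matProd L (fun i => funMat (v i) (T i)) s t =
      if t = pathEnd L T s then pathVal L v T s else 0 := by
  induction L generalizing s t with
  | zero =>
      simp only [matProd, pathEnd, pathVal]
      by_cases h : s = t <;> simp [h, eq_comm]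
  | succ L ih =>
      show matMul (funMat (v 0) (T 0))
        (matProd L fun i => funMat (v i.succ) (T i.succ)) s t = _
      rw [matMul_funMat, ih]
      simp only [pathEnd, pathVal, mul_ite, mul_zero]
      by_cases h : t = pathEnd L (fun i => T i.succ) (T 0 s) <;> simp [h]

lemma pathVal_ne_zero_eq (L : ℕ) (v : Fin L → ι → ℝ) (T B : Fin L → ι → ι)
    (i0 : Fin L) (c : ι)
    (hrec : ∀ i x, v i x ≠ 0 → B i (T i x) = x)
    (hpin : ∀ x, v i0 x ≠ 0 → x = c) :
    ∀ s, pathVal L v T s ≠ 0 → s = backComp L B i0.val c := by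
  induction L with
  | zero => exact i0.elim0
  | succ L ih =>
      intro s hs
      have h0 : v 0 s ≠ 0 := by
        intro h; exact hs (by simp [pathVal, h])
      have h1 : pathVal L (fun i => v i.succ) (fun i => T i.succ) (T 0 s) ≠ 0 := by
        intro h; exact hs (by simp [pathVal, h])
      cases i0 using Fin.cases with
      | zero => exact hpin s h0
      | succ j =>
          have hTs : T 0 s = backComp L (fun i => B i.succ) j.val c :=
            ih (fun i => v i.succ) (fun i => T i.succ) (fun i => B i.succ) j
              (fun i x => hrec i.succ x) (fun x => hpin x) (T 0 s) h1
          have hBs : B 0 (T 0 s) = s := hrec 0 s h0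
          show s = B 0 (backComp L (fun i => B i.succ) j.val c)
          rw [← hTs, hBs]

lemma pathVal_scale (L : ℕ) (v v' : Fin L → ι → ℝ) (T : Fin L → ι → ι)
    (i0 : Fin L) (cst : ℝ)
    (h : ∀ x, v i0 x = cst * v' i0 x)
    (h2 : ∀ i, i ≠ i0 → v i = v' i) :
    ∀ s, pathVal L v T s = cst * pathVal L v' T s := by
  induction L with
  | zero => exact i0.elim0
  | succ L ih =>
      intro s
      cases i0 using Fin.cases with
      | zero =>
          have hv : (fun i : Fin L => v i.succ) = (fun i => v' i.succ) :=
            funext fun i => h2 i.succ (Fin.succ_ne_zero i)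
          show v 0 s * _ = cst * (v' 0 s * _)
          rw [h s, hv]; ring
      | succ j =>
          have h0 : v 0 = v' 0 := h2 0 (Fin.succ_ne_zero j).symm
          have := ih (fun i => v i.succ) (fun i => v' i.succ) (fun i => T i.succ) j
            (fun x => h x) (fun i hi => h2 i.succ (by simpa [Fin.succ_inj] using hi))
            (T 0 s)
          show v 0 s * _ = cst * (v' 0 s * _)
          rw [h0, this]; ring

/-- Polynomial version of `pathVal`. -/
noncomputable def pathValP (n : ℕ) :
    (L : ℕ) → (Fin L → (ι → MvPolynomial (Fin n) ℕ)) → (Fin L → (ι → ι)) → ι →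
      MvPolynomial (Fin n) ℕ
  | 0, _, _, _ => 1
  | (L + 1), p, T, s =>
      p 0 s * pathValP n L (fun i => p i.succ) (fun i => T i.succ) (T 0 s)

lemma phi_pathValP (n : ℕ) (φ : MvPolynomial (Fin n) ℕ →+* ℝ)
    (L : ℕ) (p : Fin L → ι → MvPolynomial (Fin n) ℕ) (v : Fin L → ι → ℝ)
    (T : Fin L → ι → ι) (h : ∀ i x, φ (p i x) = v i x) :
    ∀ s, φ (pathValP n L p T s) = pathVal L v T s := by
  induction L with
  | zero => intro s; simp [pathValP, pathVal]
  | succ L ih =>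
      intro s
      show φ (p 0 s * _) = v 0 s * _
      rw [map_mul, h 0 s,
        ih (fun i => p i.succ) (fun i => v i.succ) (fun i => T i.succ)
          (fun i x => h i.succ x)]

end TraceAux

/-- The deterministic target map of `Aent`. -/
def Tm (N : ℕ) (μ : Fin N → ℕ) (α : Fin (N + 1) → ℕ) (s : Fin N → ℕ) : Fin N → ℕ :=
  fun j => s j - μ j + α j.castSucc

/-- The backward recovery map. -/
def Bm (N : ℕ) (μ : Fin N → ℕ) (α : Fin (N + 1) → ℕ) (t : Fin N → ℕ) : Fin N → ℕ :=
  fun j => t j - α j.castSucc + μ j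

open Classical in
/-- The value attached to row `s` of `Aent`. -/
noncomputable def vf (N : ℕ) (w : Fin (N + 1) → ℝ) (μ : Fin N → ℕ)
    (α : Fin (N + 1) → ℕ) (s : Fin N → ℕ) : ℝ :=
  if ∀ j, μ j ≤ s j then Dval N w α (fun j => s j - μ j) else 0

lemma Aent_eq_funMat (N : ℕ) (w : Fin (N + 1) → ℝ) (μ : Fin N → ℕ)
    (α : Fin (N + 1) → ℕ) :
    Aent N w μ α = funMat (vf N w μ α) (Tm N μ α) := by
  funext s t
  by_cases h2 : t = Tm N μ α s
  · subst h2
    by_cases h1 : ∀ j, μ j ≤ s j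
    · simp [Aent, AentGen, funMat, vf, Tm, h1]
    · simp [Aent, AentGen, funMat, vf, Tm, h1]
  · have h2' : ¬∀ j, t j = s j - μ j + α j.castSucc := by
      simpa [Tm, funext_iff] using h2
    simp [Aent, AentGen, funMat, vf, h2, h2']

open Classical in
/-- Polynomial version of `Dval` (with `ρ r := X r`). -/
noncomputable def DvalP (Nm : ℕ) (α : Fin (Nm + 1) → ℕ) (u : Fin Nm → ℕ) :
    MvPolynomial (Fin (Nm + 1)) ℕ :=
  (∑ r : Fin Nm,
      if (∀ b : Fin (Nm + 1), (r : ℕ) < (b : ℕ) → α b = 0) ∧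
          (∀ j : Fin Nm, j < r → u j = 0) ∧ u r ≠ 0
      then MvPolynomial.X r.castSucc else 0)
    + (if ∀ j, u j = 0 then MvPolynomial.X (Fin.last Nm) else 0)

open Classical in
/-- Polynomial version of `vf`. -/
noncomputable def vfP (N : ℕ) (μ : Fin N → ℕ) (α : Fin (N + 1) → ℕ)
    (s : Fin N → ℕ) : MvPolynomial (Fin (N + 1)) ℕ :=
  if ∀ j, μ j ≤ s j then DvalP N α (fun j => s j - μ j) else 0

lemma phi_DvalP (Nm : ℕ) (w : Fin (Nm + 1) → ℝ) (α : Fin (Nm + 1) → ℕ)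
    (u : Fin Nm → ℕ) :
    ((MvPolynomial.eval w).comp (MvPolynomial.map (Nat.castRingHom ℝ)))
        (DvalP Nm α u) = Dval Nm w α u := by
  simp only [DvalP, Dval, map_add, map_sum, apply_ite
    ((MvPolynomial.eval w).comp (MvPolynomial.map (Nat.castRingHom ℝ))), map_zero,
    RingHom.comp_apply, MvPolynomial.map_X, MvPolynomial.eval_X]

lemma phi_vfP (N : ℕ) (w : Fin (N + 1) → ℝ) (μ : Fin N → ℕ)
    (α : Fin (N + 1) → ℕ) (s : Fin N → ℕ) :
    ((MvPolynomial.eval w).comp (MvPolynomial.map (Nat.castRingHom ℝ)))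
        (vfP N μ α s) = vf N w μ α s := by
  simp only [vfP, vf, apply_ite
    ((MvPolynomial.eval w).comp (MvPolynomial.map (Nat.castRingHom ℝ))), map_zero,
    phi_DvalP]

lemma vf_pin (N : ℕ) (w : Fin (N + 1) → ℝ) (μ : Fin N → ℕ)
    (α : Fin (N + 1) → ℕ) (hα : α (Fin.last N) ≠ 0) (x : Fin N → ℕ) :
    vf N w μ α x = w (Fin.last N) * (if x = μ then 1 else 0) := by
  by_cases hx : x = μ
  · subst hx
    simp [vf, Dval]
  · rw [if_neg hx, mul_zero]
    by_cases hle : ∀ j, μ j ≤ x j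
    · rw [vf, if_pos hle]
      have hsum : ∀ r : Fin N,
          ¬((∀ b : Fin (N + 1), (r : ℕ) < (b : ℕ) → α b = 0) ∧
            (∀ j : Fin N, j < r → x j - μ j = 0) ∧ x r - μ r ≠ 0) := by
        intro r hr
        exact hα (hr.1 (Fin.last N) r.isLt)
      have hnz : ¬∀ j, x j - μ j = 0 := by
        intro h
        exact hx (funext fun j => by have := h j; have := hle j; omega)
      simp [Dval, hsum, hnz]
    · rw [vf, if_neg hle]

lemma vf_rec (N : ℕ) (w : Fin (N + 1) → ℝ) (μ : Fin N → ℕ)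
    (α : Fin (N + 1) → ℕ) (x : Fin N → ℕ) (h : vf N w μ α x ≠ 0) :
    Bm N μ α (Tm N μ α x) = x := by
  have hle : ∀ j, μ j ≤ x j := by
    by_contra hc
    exact h (by rw [vf, if_neg hc])
  funext j
  have := hle j
  simp only [Bm, Tm]
  omega

/-- divisibility of the trace.  If at least one species-`n` particle is
present, `Σ_i σ_i^n ≥ 1`, then `Tr_{F^{⊗(n-1)}}(A^{(n)}_{μ_1,σ_1} ⋯ A^{(n)}_{μ_L,σ_L})` is
finite (summable) and, as a polynomial in `w_1,…,w_n` with nonnegative integer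
coefficients, is divisible by `w_n`. -/
theorem trace_divisible_by_wn (N L : ℕ) (hN : 1 ≤ N) (hL : 1 ≤ L)
    (μ : Fin L → (Fin N → ℕ)) (σ : Fin L → (Fin (N + 1) → ℕ))
    (hσ : 1 ≤ ∑ i, σ i (Fin.last N)) :
    (∀ w : Fin (N + 1) → ℝ, (∀ a, 0 < w a) →
        Summable (fun s : Fin N → ℕ => matProd L (fun i => Aent N w (μ i) (σ i)) s s)) ∧
    ∃ Q : MvPolynomial (Fin (N + 1)) ℝ,
      (∀ d : (Fin (N + 1)) →₀ ℕ, ∃ c : ℕ, Q.coeff d = (c : ℝ)) ∧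
      ∀ w : Fin (N + 1) → ℝ, (∀ a, 0 < w a) →
        matTrace (matProd L (fun i => Aent N w (μ i) (σ i)))
          = w (Fin.last N) * MvPolynomial.eval w Q := by
  classical
  have hex : ∃ i : Fin L, σ i (Fin.last N) ≠ 0 := by
    by_contra h
    push_neg at h
    simp [h] at hσ
  obtain ⟨i0, hi0⟩ := hex
  set T : Fin L → (Fin N → ℕ) → (Fin N → ℕ) := fun i => Tm N (μ i) (σ i) with hT
  set B : Fin L → (Fin N → ℕ) → (Fin N → ℕ) := fun i => Bm N (μ i) (σ i) with hB
  set s0 : Fin N → ℕ := backComp L B i0.val (μ i0) with hs0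
  have hdiag : ∀ (w : Fin (N + 1) → ℝ) (s : Fin N → ℕ),
      matProd L (fun i => Aent N w (μ i) (σ i)) s s =
        if s = pathEnd L T s then pathVal L (fun i => vf N w (μ i) (σ i)) T s else 0 := by
    intro w s
    have : (fun i : Fin L => Aent N w (μ i) (σ i)) =
        fun i => funMat (vf N w (μ i) (σ i)) (T i) :=
      funext fun i => Aent_eq_funMat N w (μ i) (σ i)
    rw [this, matProd_funMat]
    split_ifs <;> rfl
  have hsupp : ∀ (w : Fin (N + 1) → ℝ) (s : Fin N → ℕ), s ≠ s0 →
      matProd L (fun i => Aent N w (μ i) (σ i)) s s = 0 := by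
    intro w s hs
    rw [hdiag]
    by_cases hcl : s = pathEnd L T s
    · rw [if_pos hcl]
      by_contra hv
      exact hs (pathVal_ne_zero_eq L (fun i => vf N w (μ i) (σ i)) T B i0 (μ i0)
        (fun i x => vf_rec N w (μ i) (σ i) x)
        (fun x hx => by
          have hx' : vf N w (μ i0) (σ i0) x ≠ 0 := hx
          by_contra hxx
          exact hx' (by rw [vf_pin N w (μ i0) (σ i0) hi0 x, if_neg hxx, mul_zero]))
        s hv)
    · rw [if_neg hcl]
  constructor
  · intro w hw
    exact summable_of_ne_finset_zero (s := {s0})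
      (fun s hs => hsupp w s (by simpa using hs))
  · set p : Fin L → (Fin N → ℕ) → MvPolynomial (Fin (N + 1)) ℕ :=
      fun i x => if i = i0 then (if x = μ i0 then 1 else 0) else vfP N (μ i) (σ i) x
      with hp
    refine ⟨MvPolynomial.map (Nat.castRingHom ℝ)
      (if s0 = pathEnd L T s0 then pathValP (N + 1) L p T s0 else 0), ?_, ?_⟩
    · intro d
      refine ⟨(if s0 = pathEnd L T s0 then pathValP (N + 1) L p T s0 else 0).coeff d, ?_⟩
      rw [MvPolynomial.coeff_map]
      rfl
    · intro w hw
      set φ : MvPolynomial (Fin (N + 1)) ℕ →+* ℝ :=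
        (MvPolynomial.eval w).comp (MvPolynomial.map (Nat.castRingHom ℝ)) with hφ
      have htr : matTrace (matProd L (fun i => Aent N w (μ i) (σ i))) =
          matProd L (fun i => Aent N w (μ i) (σ i)) s0 s0 :=
        tsum_eq_single s0 (fun s hs => hsupp w s hs)
      rw [htr, hdiag]
      have hev : ∀ P : MvPolynomial (Fin (N + 1)) ℕ,
          MvPolynomial.eval w (MvPolynomial.map (Nat.castRingHom ℝ) P) = φ P :=
        fun P => rfl
      split_ifs with hcl
      · rw [hev]
        have hstep1 : pathVal L (fun i => vf N w (μ i) (σ i)) T s0 =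
            w (Fin.last N) * pathVal L (fun i x => φ (p i x)) T s0 := by
          refine pathVal_scale L (fun i => vf N w (μ i) (σ i)) (fun i x => φ (p i x))
            T i0 (w (Fin.last N)) (fun x => ?_) (fun i hi => ?_) s0
          · show vf N w (μ i0) (σ i0) x = w (Fin.last N) * φ (p i0 x)
            rw [vf_pin N w (μ i0) (σ i0) hi0 x]
            congr 1
            simp [hp, apply_ite φ]
          · funext x
            show vf N w (μ i) (σ i) x = φ (p i x)
            rw [hp]
            simp only [if_neg hi]
            exact (phi_vfP N w (μ i) (σ i) x).symm
        rw [hstep1,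
          phi_pathValP (N + 1) φ L p (fun i x => φ (p i x)) T (fun i x => rfl) s0]
      · rw [hev, map_zero, mul_zero]

end ITAZRP
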